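/- Let n ≥ 2 be an integer, t ∈ [0,1), and μ ∈ [μ₀(n,t), -t/n] where μ₀(n,t) = ((3-2n)t + 1 - 2n + sqrt((1-t)((4n-5)t + 4n²-4n+1)))/(2(n-1)²). Define A = ((1-t)/(2t+(n-1)μ))·(1/(n+1))·(3t + 2(n-1)μ - n + n(1+t+(n-1)μ)²/(1-t)) when 2t + (n-1)μ ≠ 0. Then A ≥ 0. -/
import Mathlib

set_option maxHeartbeats 1000000


/-- Let `n ≥ 2`, `t ∈ [0,1)`, `μ ∈ [μ₀(n,t), -t/n]` with `2t + (n-1)μ ≠ 0`, and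
`A = ((1-t)/(2t+(n-1)μ))·(1/(n+1))·(3t + 2(n-1)μ - n + n(1+t+(n-1)μ)²/(1-t))`.
Then `A ≥ 0`. -/
theorem stmt9 (n : ℕ) (hn : 2 ≤ n) (t μ : ℝ) (ht0 : 0 ≤ t) (ht1 : t < 1)
    (hμl : ((3 - 2*(n:ℝ))*t + 1 - 2*(n:ℝ) +
        Real.sqrt ((1 - t) * ((4*(n:ℝ) - 5)*t + 4*(n:ℝ)^2 - 4*(n:ℝ) + 1)))
      / (2*((n:ℝ) - 1)^2) ≤ μ)
    (hμu : μ ≤ -t/(n:ℝ))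
    (hden : 2*t + ((n:ℝ) - 1)*μ ≠ 0)
    (A : ℝ)
    (hA : A = ((1 - t)/(2*t + ((n:ℝ) - 1)*μ)) * (1/((n:ℝ) + 1)) *
      (3*t + 2*((n:ℝ) - 1)*μ - (n:ℝ) + (n:ℝ)*(1 + t + ((n:ℝ) - 1)*μ)^2/(1 - t))) :
    A ≥ 0 := by
  set N := (n:ℝ) with hNdef
  have hN2 : (2:ℝ) ≤ N := by rw [hNdef]; exact_mod_cast hn
  have ht1' : (0:ℝ) < 1 - t := by linarith
  set s := (1 - t) * ((4*N - 5)*t + 4*N^2 - 4*N + 1) with hs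
  have hs0 : 0 ≤ s := by
    rw [hs]
    apply mul_nonneg ht1'.le
    nlinarith
  have hd2 : (0:ℝ) < 2*(N-1)^2 := by nlinarith
  have hL : Real.sqrt s ≤ 2*(N-1)^2*μ + ((2*N-3)*t + 2*N-1) := by
    rw [div_le_iff₀ hd2] at hμl
    nlinarith [hμl]
  have hL0 : 0 ≤ 2*(N-1)^2*μ + ((2*N-3)*t + 2*N-1) :=
    le_trans (Real.sqrt_nonneg s) hL
  have hq' : s ≤ (2*(N-1)^2*μ + ((2*N-3)*t + 2*N-1))^2 := by
    nlinarith [Real.sq_sqrt hs0, Real.sqrt_nonneg s, hL]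
  have hq : 0 ≤ (N-1)^2*μ^2 + ((2*N-3)*t + 2*N-1)*μ + t^2 + 3*t := by
    have h4 : 0 ≤ 4*(N-1)^2 * ((N-1)^2*μ^2 + ((2*N-3)*t + 2*N-1)*μ + t^2 + 3*t) := by
      nlinarith [hq', hs]
    by_contra hqn
    push_neg at hqn
    nlinarith [h4, mul_pos hd2 (neg_pos.mpr hqn)]
  have hbr : 0 < (N-1)^2*μ - t + 2*N - 1 := by
    nlinarith [hL0, mul_pos (show (0:ℝ) < 2*N-1 by linarith) ht1']
  have hD0 : 0 ≤ 2*t + (N-1)*μ := by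
    by_contra h
    push_neg at h
    nlinarith [hq, mul_pos (neg_pos.mpr h) hbr,
      mul_nonneg (show (0:ℝ) ≤ N-1 by linarith) hq,
      mul_nonneg (mul_nonneg (show (0:ℝ) ≤ N+1 by linarith) ht0) ht1'.le]
  have hD : 0 < 2*t + (N-1)*μ := lt_of_le_of_ne hD0 (Ne.symm hden)
  have hG : 0 ≤ (N-2)*μ + 3*t := by
    rcases le_or_gt ((4*N-5)*t) (3*(N-2)) with h | h
    · by_contra hg
      push_neg at hg
      nlinarith [mul_nonneg (sq_nonneg (N-2)) hq,
        mul_pos (neg_pos.mpr hg) (neg_pos.mpr hg),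
        mul_nonneg (mul_nonneg (show (0:ℝ) ≤ N-2 by linarith)
          (show (0:ℝ) ≤ -((N-2)*μ + 3*t) by linarith)) hL0,
        mul_nonneg (mul_nonneg ht0 (show (0:ℝ) ≤ N+1 by linarith))
          (show (0:ℝ) ≤ 3*(N-2) - (4*N-5)*t by linarith)]
    · nlinarith [mul_nonneg (show (0:ℝ) ≤ N-2 by linarith) hL0,
        mul_le_mul_of_nonneg_left h.le (show (0:ℝ) ≤ N by linarith)]
  have hF : 0 ≤ N*(N-1)^2*μ^2 + 2*(N-1)*(N+1+(N-1)*t)*μ + 3*(N+1)*t + (N-3)*t^2 := by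
    nlinarith [mul_nonneg (show (0:ℝ) ≤ N by linarith) hq, mul_nonneg ht1'.le hG]
  have hNe1 : (1:ℝ) - t ≠ 0 := ne_of_gt ht1'
  have hN1 : (0:ℝ) < N + 1 := by linarith
  have key : ((1 - t)/(2*t + (N - 1)*μ)) * (1/(N + 1)) *
      (3*t + 2*(N - 1)*μ - N + N*(1 + t + (N - 1)*μ)^2/(1 - t)) =
      (N*(N-1)^2*μ^2 + 2*(N-1)*(N+1+(N-1)*t)*μ + 3*(N+1)*t + (N-3)*t^2) /
        ((2*t + (N-1)*μ) * (N+1)) := by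
    field_simp
    ring
  rw [hA, key]
  exact div_nonneg hF (mul_pos hD hN1).le
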